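/- Let (X, τ) be a hereditarily normal T1 space and let M ⊆ X be a subspace with ind M ≤ 0, i.e., every point of M has a neighborhood basis in the subspace M consisting of relatively clopen subsets of M. Then (X, τ(M)) is a hereditarily normal T1 space with ind (X, τ(M)) ≤ 0: every point of X has a τ(M)-neighborhood basis consisting of τ(M)-clopen sets. -/

import Mathlib

/-- The Bing–Hanner extension `τ(M)` of a topology `τ` on `X` determined by a subset `M ⊆ X`:
its open sets are exactly the sets of the form `U ∪ K` with `U` a `τ`-open set and
`K ⊆ X \ M`. -/
def bingHanner {X : Type*} (τ : TopologicalSpace X) (M : Set X) : TopologicalSpace X where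
  IsOpen O := ∃ U K : Set X, τ.IsOpen U ∧ K ⊆ Mᶜ ∧ O = U ∪ K
  isOpen_univ := ⟨Set.univ, ∅, τ.isOpen_univ, by simp, by simp⟩
  isOpen_inter := by
    rintro s t ⟨U₁, K₁, hU₁, hK₁, rfl⟩ ⟨U₂, K₂, hU₂, hK₂, rfl⟩
    refine ⟨U₁ ∩ U₂, ((U₁ ∪ K₁) ∩ (U₂ ∪ K₂)) \ (U₁ ∩ U₂),
      τ.isOpen_inter _ _ hU₁ hU₂, ?_, ?_⟩
    · rintro x ⟨⟨h1, h2⟩, hn⟩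
      rcases h1 with h1 | h1
      · rcases h2 with h2 | h2
        · exact absurd ⟨h1, h2⟩ hn
        · exact hK₂ h2
      · exact hK₁ h1
    · have hsub : U₁ ∩ U₂ ⊆ (U₁ ∪ K₁) ∩ (U₂ ∪ K₂) :=
        fun x hx => ⟨Or.inl hx.1, Or.inl hx.2⟩
      exact (Set.union_diff_cancel hsub).symm
  isOpen_sUnion := by
    intro S hS
    choose U K hU hK hEq using hS
    refine ⟨⋃ s, ⋃ h : s ∈ S, U s h, ⋃ s, ⋃ h : s ∈ S, K s h, ?_, ?_, ?_⟩
    · letI := τ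
      exact isOpen_iUnion fun s => isOpen_iUnion fun h => hU s h
    · exact Set.iUnion_subset fun s => Set.iUnion_subset fun h => hK s h
    · ext x
      simp only [Set.mem_sUnion, Set.mem_union, Set.mem_iUnion]
      constructor
      · rintro ⟨s, hs, hx⟩
        rw [hEq s hs] at hx
        rcases hx with hx | hx
        · exact Or.inl ⟨s, hs, hx⟩
        · exact Or.inr ⟨s, hs, hx⟩
      · rintro (⟨s, hs, hx⟩ | ⟨s, hs, hx⟩)
        · exact ⟨s, hs, by rw [hEq s hs]; exact Or.inl hx⟩
        · exact ⟨s, hs, by rw [hEq s hs]; exact Or.inr hx⟩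

/-- `covDimLE t n` : the covering dimension of `(X, t)` is at most `n`, i.e. every finite
open cover admits a finite open refinement covering `X` in which any `n + 2` pairwise
distinct members have empty intersection. -/
def covDimLE {X : Type*} (t : TopologicalSpace X) (n : ℕ) : Prop :=
  ∀ C : Set (Set X), C.Finite → (∀ U ∈ C, t.IsOpen U) → ⋃₀ C = Set.univ →
    ∃ V : Set (Set X), V.Finite ∧ (∀ U ∈ V, t.IsOpen U) ∧ ⋃₀ V = Set.univ ∧
      (∀ U ∈ V, ∃ W ∈ C, U ⊆ W) ∧
      ∀ F : Finset (Set X), ↑F ⊆ V → F.card = n + 2 → ⋂₀ (F : Set (Set X)) = ∅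

/-- `IndLE0 t` : the large inductive dimension of `(Z, t)` is at most `0`, i.e. any two
disjoint closed sets are separated by a clopen set. -/
def IndLE0 {Z : Type*} (t : TopologicalSpace Z) : Prop :=
  ∀ A B : Set Z, @IsClosed Z t A → @IsClosed Z t B → Disjoint A B →
    ∃ U : Set Z, t.IsOpen U ∧ @IsClosed Z t U ∧ A ⊆ U ∧ U ∩ B = ∅

/-- `indLE0 t` : the small inductive dimension of `(Z, t)` is at most `0`, i.e. every point
has a neighborhood basis of clopen sets. -/
def indLE0 {Z : Type*} (t : TopologicalSpace Z) : Prop :=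
  ∀ (x : Z) (O : Set Z), t.IsOpen O → x ∈ O →
    ∃ U : Set Z, t.IsOpen U ∧ @IsClosed Z t U ∧ x ∈ U ∧ U ⊆ O

/-- `L` is a partition between `A` and `B` in `(X, t)`. -/
def isPartitionBetween {X : Type*} (t : TopologicalSpace X) (A B L : Set X) : Prop :=
  ∃ U V : Set X, t.IsOpen U ∧ t.IsOpen V ∧ Disjoint U V ∧ A ⊆ U ∧ B ⊆ V ∧ L = (U ∪ V)ᶜ

section BHaux

variable {X : Type*} {τ : TopologicalSpace X} {M : Set X}

lemma bh_isOpen_of {U : Set X} (hU : τ.IsOpen U) : (bingHanner τ M).IsOpen U :=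
  ⟨U, ∅, hU, by simp, (Set.union_empty U).symm⟩

lemma bh_isOpen_compl_subset {K : Set X} (hK : K ⊆ Mᶜ) : (bingHanner τ M).IsOpen K :=
  ⟨∅, K, @isOpen_empty X τ, hK, (Set.empty_union K).symm⟩

lemma bh_isClosed_of {C : Set X} (hC : @IsClosed X τ C) : @IsClosed X (bingHanner τ M) C :=
  @IsClosed.mk X (bingHanner τ M) C (bh_isOpen_of (@IsClosed.isOpen_compl X τ C hC))

lemma bh_mem_closure {A : Set X} {z : X} (hzM : z ∈ M) (hz : z ∈ @closure X τ A) :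
    z ∈ @closure X (bingHanner τ M) A := by
  refine (@mem_closure_iff X (bingHanner τ M) z A).2 ?_
  rintro o ⟨U, K, hU, hK, rfl⟩ hzo
  have hzU : z ∈ U := by
    rcases hzo with h | h
    · exact h
    · exact absurd hzM (hK h)
  obtain ⟨w, hw1, hw2⟩ := (@mem_closure_iff X τ z A).1 hz U hU hzU
  exact ⟨w, Or.inl hw1, hw2⟩

/-- τ-level separation core for the complete-normality proof. -/
lemma bh_sep_core {Y : Type*} [TopologicalSpace Y] [T5Space Y] (A B M : Set Y) :
    ∃ U V : Set Y, IsOpen U ∧ IsOpen V ∧ ((closure A ∩ M) \ closure B) ⊆ U ∧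
      ((closure B ∩ M) \ closure A) ⊆ V ∧ Disjoint U V ∧
      Disjoint U (closure B) ∧ Disjoint V (closure A) := by
  set A₁ := (closure A ∩ M) \ closure B with hA₁
  set B₁ := (closure B ∩ M) \ closure A with hB₁
  have hclA : closure A₁ ⊆ closure A :=
    closure_minimal (fun x hx => hx.1.1) isClosed_closure
  have hclB : closure B₁ ⊆ closure B :=
    closure_minimal (fun x hx => hx.1.1) isClosed_closure
  have h1 : Disjoint (closure A₁) B₁ :=
    Set.disjoint_left.2 fun x hx hx' => hx'.2 (hclA hx)
  have h2 : Disjoint A₁ (closure B₁) :=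
    Set.disjoint_left.2 fun x hx hx' => hx.2 (hclB hx')
  obtain ⟨U, V, hUo, hVo, hAU, hBV, hUV⟩ :=
    separatedNhds_iff_disjoint.mpr (completely_normal h1 h2)
  refine ⟨U ∩ (closure B)ᶜ, V ∩ (closure A)ᶜ,
    hUo.inter isClosed_closure.isOpen_compl, hVo.inter isClosed_closure.isOpen_compl,
    fun x hx => ⟨hAU hx, hx.2⟩, fun x hx => ⟨hBV hx, hx.2⟩,
    Set.disjoint_left.2 fun x hx hx' => Set.disjoint_left.1 hUV hx.1 hx'.1,
    Set.disjoint_left.2 fun x hx hx' => hx.2 hx',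
    Set.disjoint_left.2 fun x hx hx' => hx.2 hx'⟩

/-- τ-level separation of sets sitting in "cross-disjoint" open sets. -/
lemma bh_sep_core2 {Y : Type*} [TopologicalSpace Y] [T5Space Y] {S T : Set Y}
    (W W' : Set Y) (hW : IsOpen W) (hW' : IsOpen W') (hSW : S ⊆ W) (hTW' : T ⊆ W')
    (hS : Disjoint W' S) (hT : Disjoint W T) :
    ∃ G H : Set Y, IsOpen G ∧ IsOpen H ∧ S ⊆ G ∧ T ⊆ H ∧ Disjoint G H := by
  have h1 : Disjoint (closure S) T := by
    have hc : closure S ⊆ W'ᶜ :=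
      closure_minimal (fun x hx hx' => Set.disjoint_left.1 hS hx' hx) hW'.isClosed_compl
    exact Set.disjoint_left.2 fun x hx hx' => hc hx (hTW' hx')
  have h2 : Disjoint S (closure T) := by
    have hc : closure T ⊆ Wᶜ :=
      closure_minimal (fun x hx hx' => Set.disjoint_left.1 hT hx' hx) hW.isClosed_compl
    exact Set.disjoint_left.2 fun x hx hx' => hc hx' (hSW hx)
  obtain ⟨G, H, hGo, hHo, hSG, hTH, hGH⟩ :=
    separatedNhds_iff_disjoint.mpr (completely_normal h1 h2)
  exact ⟨G, H, hGo, hHo, hSG, hTH, hGH⟩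

end BHaux

/-- If `(X, τ)` is hereditarily normal `T₁` and `M ⊆ X` satisfies
`ind M ≤ 0`, then `(X, τ(M))` is hereditarily normal `T₁` with `ind (X, τ(M)) ≤ 0`. -/
theorem bingHanner_T5_and_indZero {X : Type*} (τ : TopologicalSpace X)
    (hT5 : @T5Space X τ) (M : Set X)
    (hM : indLE0 (TopologicalSpace.induced (Subtype.val : M → X) τ)) :
    @T5Space X (bingHanner τ M) ∧ indLE0 (bingHanner τ M) := by
  -- T1 for the Bing–Hanner extension
  have hT1' : @T1Space X (bingHanner τ M) :=
    @T1Space.mk X (bingHanner τ M) (fun x => bh_isClosed_of (@T1Space.t1 X τ hT5.toT1Space x))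
  -- complete normality
  have hCN : @CompletelyNormalSpace X (bingHanner τ M) := by
    refine @CompletelyNormalSpace.mk X (bingHanner τ M) fun A B h1 h2 => ?_
    refine (@separatedNhds_iff_disjoint X (bingHanner τ M) A B).1 ?_
    have hAB : ∀ x ∈ A, x ∉ B := fun x hx =>
      Set.disjoint_left.1 h1 (@subset_closure X (bingHanner τ M) A _ hx)
    have hMB : ∀ z ∈ M, z ∈ @closure X τ A → z ∉ B := fun z hzM hz =>
      Set.disjoint_left.1 h1 (bh_mem_closure hzM hz)
    have hMA : ∀ z ∈ M, z ∈ @closure X τ B → z ∉ A := fun z hzM hz hzA =>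
      Set.disjoint_left.1 h2 hzA (bh_mem_closure hzM hz)
    obtain ⟨U, V, hUo, hVo, hAU, hBV, hUV, hUB, hVA⟩ := @bh_sep_core X τ hT5 A B M
    refine ⟨U ∪ (A \ M), V ∪ (B \ M),
      ⟨U, A \ M, hUo, fun z hz => hz.2, rfl⟩,
      ⟨V, B \ M, hVo, fun z hz => hz.2, rfl⟩, ?_, ?_, ?_⟩
    · intro a ha
      by_cases haM : a ∈ M
      · exact Or.inl (hAU ⟨⟨@subset_closure X τ A _ ha, haM⟩,
          fun hcb => hMA a haM hcb ha⟩)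
      · exact Or.inr ⟨ha, haM⟩
    · intro b hb
      by_cases hbM : b ∈ M
      · exact Or.inl (hBV ⟨⟨@subset_closure X τ B _ hb, hbM⟩,
          fun hca => hMB b hbM hca hb⟩)
      · exact Or.inr ⟨hb, hbM⟩
    · rw [Set.disjoint_left]
      rintro z (hz | hz) (hz' | hz')
      · exact Set.disjoint_left.1 hUV hz hz'
      · exact Set.disjoint_left.1 hUB hz (@subset_closure X τ B _ hz'.1)
      · exact Set.disjoint_left.1 hVA hz' (@subset_closure X τ A _ hz.1)
      · exact hAB z hz.1 hz'.1
  -- the small inductive dimension statement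
  have hind : indLE0 (bingHanner τ M) := by
    rintro x O ⟨U, K, hU, hK, rfl⟩ hxO
    by_cases hxM : x ∈ M
    · have hxU : x ∈ U := by
        rcases hxO with h | h
        · exact h
        · exact absurd hxM (hK h)
      obtain ⟨S, hSo, hSc, hxS, hSU⟩ :=
        hM ⟨x, hxM⟩ (Subtype.val ⁻¹' U) ⟨U, hU, rfl⟩ hxU
      obtain ⟨W, hW, hWS⟩ := hSo
      obtain ⟨W', hW', hW'S⟩ := hSc.isOpen_compl
      set S' : Set X := Subtype.val '' S with hS'def
      have hS'W : S' ⊆ W := by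
        rintro _ ⟨y, hy, rfl⟩
        rw [← hWS] at hy
        exact hy
      have hS'U : S' ⊆ U := by
        rintro _ ⟨y, hy, rfl⟩
        exact hSU hy
      have hMSW' : M \ S' ⊆ W' := by
        intro z hz
        have hzS : (⟨z, hz.1⟩ : M) ∈ Sᶜ := fun h => hz.2 ⟨⟨z, hz.1⟩, h, rfl⟩
        rw [← hW'S] at hzS
        exact hzS
      have hd1 : Disjoint W' S' := by
        rw [Set.disjoint_left]
        rintro _ hzW' ⟨y, hy, rfl⟩
        have : y ∈ Sᶜ := by rw [← hW'S]; exact hzW'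
        exact this hy
      have hd2 : Disjoint W (M \ S') := by
        rw [Set.disjoint_left]
        intro z hzW hz
        have : (⟨z, hz.1⟩ : M) ∈ S := by rw [← hWS]; exact hzW
        exact hz.2 ⟨⟨z, hz.1⟩, this, rfl⟩
      obtain ⟨G, H, hGo, hHo, hSG, hMH, hGH⟩ :=
        @bh_sep_core2 X τ hT5 S' (M \ S') W W' hW hW' hS'W hMSW' hd1 hd2
      refine ⟨G ∩ U, bh_isOpen_of (hGo.inter hU), ?_,
        ⟨hSG ⟨⟨x, hxM⟩, hxS, rfl⟩, hxU⟩, fun z hz => Or.inl hz.2⟩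
      refine @IsClosed.mk X (bingHanner τ M) _ ⟨H, (G ∩ U)ᶜ \ M, hHo, fun z hz => hz.2, ?_⟩
      ext z
      constructor
      · intro hz
        by_cases hzM : z ∈ M
        · by_cases hzS : z ∈ S'
          · exact absurd ⟨hSG hzS, hS'U hzS⟩ hz
          · exact Or.inl (hMH ⟨hzM, hzS⟩)
        · exact Or.inr ⟨hz, hzM⟩
      · rintro (hz | hz)
        · exact fun hz' => Set.disjoint_left.1 hGH hz'.1 hz
        · exact hz.1
    · refine ⟨{x}, bh_isOpen_compl_subset ?_,
        bh_isClosed_of (@T1Space.t1 X τ hT5.toT1Space x), rfl,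
        Set.singleton_subset_iff.2 hxO⟩
      intro z hz
      rw [Set.mem_singleton_iff] at hz
      subst hz
      exact hxM
  exact ⟨@T5Space.mk X (bingHanner τ M) hT1' hCN, hind⟩
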